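/- arXiv:2106.06449 — 7 statements merged into one kernel-verified Lean document; each statement's English description precedes it below -/
import Mathlib

section
/- Let s and n be integers with n > 0 and s ≡ -1 (mod 4). If n is odd then v_2(S_s(n)) = 0, and if n is even then v_2(S_s(n)) = v_2(n) + v_2(s+1) - 1, where S_s(n) = ∑_{i=0}^{n-1} s^i. -/
/-- `S s n = ∑_{i=0}^{n-1} s^i`. -/
def S (s : ℤ) (n : ℕ) : ℤ := ∑ i ∈ Finset.range n, s ^ i

theorem stmt7 (s : ℤ) (n : ℕ) (hn : 0 < n) (hs : (4 : ℤ) ∣ s + 1) :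
    (Odd n → emultiplicity (2 : ℤ) (S s n) = 0) ∧
    (Even n → emultiplicity (2 : ℤ) (S s n) =
      emultiplicity (2 : ℤ) (n : ℤ) + emultiplicity (2 : ℤ) (s + 1) - 1) := by
  have h2 : (2 : ℤ) ∣ s + 1 := dvd_trans ⟨2, by norm_num⟩ hs
  have hsodd : ¬ (2 : ℤ) ∣ s := by
    intro h
    have : (2:ℤ) ∣ 1 := by
      have := dvd_sub h2 h
      simpa using this
    norm_num at this
  constructor
  · -- odd case
    intro hodd
    rw [emultiplicity_eq_zero]
    intro hdvd
    -- work in ZMod 2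
    have hcast : ((S s n : ℤ) : ZMod 2) = 0 := (ZMod.intCast_zmod_eq_zero_iff_dvd _ 2).2 hdvd
    have hs1 : ((s : ZMod 2)) = 1 := by
      have h0 : ((s + 1 : ℤ) : ZMod 2) = 0 := (ZMod.intCast_zmod_eq_zero_iff_dvd _ 2).2 h2
      push_cast at h0
      have : (s : ZMod 2) = -1 := by linear_combination h0
      rw [this]; decide
    have : ((S s n : ℤ) : ZMod 2) = (n : ZMod 2) := by
      unfold S
      push_cast
      rw [hs1]
      simp
    rw [this] at hcast
    have hn2 : (2 : ℕ) ∣ n := (ZMod.natCast_eq_zero_iff n 2).1 hcast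
    exact (Nat.not_even_iff_odd.2 hodd) (even_iff_two_dvd.2 hn2)
  · -- even case
    intro heven
    by_cases hsm : s = -1
    · subst hsm
      have hS0 : S (-1) n = 0 := by
        unfold S
        rw [neg_one_geom_sum, if_pos heven]
      have h0 : ((-1 : ℤ) + 1) = 0 := by ring
      rw [hS0, h0, emultiplicity_zero]
      simp
    · have hs1ne : s + 1 ≠ 0 := fun h => hsm (by linarith [h.symm ▸ (rfl : s + 1 = s + 1)])
      have hnne : (n : ℤ) ≠ 0 := Int.natCast_ne_zero.2 hn.ne'
      -- v2(s-1) = 1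
      have hv1 : emultiplicity (2 : ℤ) (s - 1) = 1 := by
        rw [show ((1 : ℕ∞)) = ((1 : ℕ) : ℕ∞) by rfl, emultiplicity_eq_coe]
        constructor
        · exact (show s - 1 = (s+1) - 2 by ring) ▸ dvd_sub h2 (dvd_refl 2)
        · intro h
          have h4 : (4 : ℤ) ∣ s - 1 := by
            have : (2:ℤ)^(1+1) = 4 := by norm_num
            rwa [this] at h
          have : (4:ℤ) ∣ 2 := by
            have := dvd_sub hs h4
            simpa using this
          norm_num at this
      -- LTE
      have hlte := Int.two_pow_sub_pow (x := s) (y := 1) (n := n)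
        ((show s - 1 = (s+1) - 2 by ring) ▸ dvd_sub h2 (dvd_refl 2)) hsodd heven
      simp only [one_pow] at hlte
      -- geometric sum
      have hgeom : S s n * (s - 1) = s ^ n - 1 := geom_sum_mul s n
      have hmul : emultiplicity (2:ℤ) (s ^ n - 1) =
          emultiplicity (2:ℤ) (S s n) + emultiplicity (2:ℤ) (s - 1) := by
        rw [← hgeom, emultiplicity_mul Int.prime_two]
      -- finiteness
      have hSne : S s n ≠ 0 := by
        intro h
        rw [h, zero_mul] at hgeom
        have hpow : s ^ n = 1 := by linarith [hgeom]
        have hu : IsUnit s := IsUnit.of_pow_eq_one hpow hn.ne'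
        rcases Int.isUnit_iff.1 hu with h1 | h1
        · rw [h1] at hs; norm_num at hs
        · exact hsm h1
      have fS : FiniteMultiplicity (2:ℤ) (S s n) := Int.finiteMultiplicity_iff.2 ⟨by norm_num, hSne⟩
      have fns : FiniteMultiplicity (2:ℤ) (s+1) := Int.finiteMultiplicity_iff.2 ⟨by norm_num, hs1ne⟩
      have fnn : FiniteMultiplicity (2:ℤ) (n:ℤ) := Int.finiteMultiplicity_iff.2 ⟨by norm_num, hnne⟩
      rw [hmul, hv1] at hlte
      rw [fS.emultiplicity_eq_multiplicity, fns.emultiplicity_eq_multiplicity,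
        fnn.emultiplicity_eq_multiplicity] at hlte ⊢
      set a := multiplicity (2:ℤ) (S s n)
      set b := multiplicity (2:ℤ) ((n:ℤ))
      set c := multiplicity (2:ℤ) (s+1)
      have key : a + 1 + 1 = c + 1 + b := by exact_mod_cast hlte
      have : a = b + c - 1 := by omega
      rw [this, ENat.coe_sub]
      push_cast
      rfl
end

section
/- Let s be an integer with s ≡ -1 (mod 4) and let n ≥ 2 be an integer. Then the multiplicative order of s modulo 2^n equals 2^{max(1, n - v_2(s+1))}. -/
/-- The multiplicative order of `s ≡ -1 (mod 4)` modulo `2^n`, `n ≥ 2`, is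
`2^(max(1, n - v_2(s+1)))`, the subtraction taken in `ℕ∞` (so `n - ∞ = 0`). -/
theorem stmt8 (s : ℤ) (n : ℕ) (hn : 2 ≤ n) (hs : (4 : ℤ) ∣ s + 1) :
    orderOf ((s : ZMod (2 ^ n))) =
      2 ^ (max 1 (((n : ℕ∞) - emultiplicity (2 : ℤ) (s + 1)).toNat)) := by
  have hs2 : ¬ (2:ℤ) ∣ s := by obtain ⟨k, hk⟩ := hs; omega
  haveI : Fact (1 < 2 ^ n) := ⟨Nat.one_lt_pow (by omega) (by norm_num)⟩
  have hcast : ∀ k : ℕ, (s : ZMod (2 ^ n)) ^ k = 1 ↔ (2:ℤ) ^ n ∣ s ^ k - 1 := by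
    intro k
    rw [← sub_eq_zero]
    have h1 : ((s : ZMod (2 ^ n))) ^ k - 1 = (((s ^ k - 1 : ℤ)) : ZMod (2 ^ n)) := by
      push_cast; ring
    rw [h1, ZMod.intCast_zmod_eq_zero_iff_dvd]
    push_cast; rfl
  -- key LTE computation
  have key : ∀ e : ℕ, 1 ≤ e →
      emultiplicity (2:ℤ) (s ^ 2 ^ e - 1) = emultiplicity (2:ℤ) (s + 1) + e := by
    intro e he
    have h4 : (4:ℤ) ∣ s - (-1) := by simpa [sub_neg_eq_add] using hs
    have := Int.two_pow_two_pow_sub_pow_two_pow e h4 hs2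
    rwa [Even.neg_one_pow (Nat.even_pow.mpr ⟨even_two, by omega⟩),
      sub_neg_eq_add] at this
  by_cases h1 : (2:ℤ) ^ n ∣ s + 1
  · -- s ≡ -1 mod 2^n, order is 2
    have hsm1 : (s : ZMod (2 ^ n)) = -1 := by
      have h2 : (((s + 1 : ℤ)) : ZMod (2 ^ n)) = 0 := by
        rw [ZMod.intCast_zmod_eq_zero_iff_dvd]; push_cast; exact_mod_cast h1
      push_cast at h2
      linear_combination h2
    have hle : (n : ℕ∞) ≤ emultiplicity (2:ℤ) (s + 1) := le_emultiplicity_of_pow_dvd h1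
    rw [hsm1, orderOf_neg_one, tsub_eq_zero_of_le hle]
    have hchar : ringChar (ZMod (2 ^ n)) ≠ 2 := by
      rw [ZMod.ringChar_zmod_n]
      have : 4 ≤ 2 ^ n := by calc 4 = 2 ^ 2 := rfl
                                 _ ≤ 2 ^ n := Nat.pow_le_pow_right (by norm_num) hn
      omega
    simp [hchar]
  · -- finite valuation case
    have hsne : s + 1 ≠ 0 := by rintro h; exact h1 ⟨0, by linarith⟩
    have hfin : FiniteMultiplicity (2:ℤ) (s + 1) :=
      Int.finiteMultiplicity_iff.2 ⟨by norm_num, hsne⟩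
    set v := multiplicity (2:ℤ) (s + 1) with hvdef
    have hv : emultiplicity (2:ℤ) (s + 1) = (v : ℕ∞) := hfin.emultiplicity_eq_multiplicity
    have hv2 : 2 ≤ v := by
      have := le_emultiplicity_of_pow_dvd (b := s + 1) (by exact_mod_cast hs : (2:ℤ) ^ 2 ∣ s + 1)
      rw [hv] at this; exact_mod_cast this
    have hvn : v < n := by
      by_contra h
      push_neg at h
      exact h1 (pow_dvd_of_le_emultiplicity (by rw [hv]; exact_mod_cast h))
    -- simplify the RHS exponent
    have hrhs : max 1 (((n : ℕ∞) - emultiplicity (2:ℤ) (s + 1)).toNat) = n - v := by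
      rw [hv, ← ENat.coe_sub]
      simp only [ENat.toNat_coe]
      omega
    rw [hrhs]
    have hnv : n - v = (n - v - 1) + 1 := by omega
    rw [hnv]
    apply orderOf_eq_prime_pow
    · -- not 1 at exponent 2^(n-v-1)
      rw [hcast]
      intro hdvd
      rcases Nat.eq_zero_or_pos (n - v - 1) with h0 | hpos
      · rw [h0] at hdvd
        simp only [pow_zero, pow_one] at hdvd
        have h4' : (4:ℤ) ∣ s - 1 := dvd_trans (by
          have : (4:ℤ) = 2 ^ 2 := by norm_num
          rw [this]; exact pow_dvd_pow 2 hn) hdvd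
        omega
      · have := le_emultiplicity_of_pow_dvd hdvd
        rw [key _ hpos, hv] at this
        have : (n : ℕ∞) ≤ ((v + (n - v - 1) : ℕ) : ℕ∞) := by exact_mod_cast this
        have := ENat.coe_le_coe.mp this
        omega
    · -- equals 1 at exponent 2^(n-v)
      rw [← hnv, hcast]
      apply pow_dvd_of_le_emultiplicity
      rw [key _ (by omega), hv]
      have : ((v : ℕ∞)) + ((n - v : ℕ) : ℕ∞) = ((n : ℕ)) := by
        rw [← Nat.cast_add]
        congr 1
        omega
      exact le_of_eq this.symm
end

section
/- Let p be an odd prime, let m, a, n be positive integers with a = v_p(s - 1) < m for an integer s ≡ 1 (mod p), and suppose p^{m-a} divides n or p^{m-a} divides n - 1. Then S_s(n) ≡ n (mod p^m), where S_s(n) = ∑_{i=0}^{n-1} s^i. -/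
lemma S_succ (s : ℤ) (n : ℕ) : S s (n+1) = S s n + s^n := Finset.sum_range_succ _ _

lemma S_add (s : ℤ) (a b : ℕ) : S s (a + b) = S s a + s^a * S s b := by
  rw [S, Finset.sum_range_add]
  simp only [pow_add, S, Finset.mul_sum]

lemma S_mul (s : ℤ) (a b : ℕ) : S s (a * b) = S s a * S (s ^ a) b := by
  induction b with
  | zero => simp [S]
  | succ b ih =>
    rw [Nat.mul_succ, S_add, ih, S_succ, mul_add, ← pow_mul]
    ring

lemma S_modEq (M s : ℤ) (h : s ≡ 1 [ZMOD M]) (n : ℕ) : S s n ≡ (n:ℤ) [ZMOD M] := by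
  induction n with
  | zero => simp [S]
  | succ n ih =>
    rw [S_succ]
    push_cast
    exact ih.add ((Int.ModEq.pow n h).trans (by simp))

lemma geom_S (u : ℤ) (j : ℕ) : S u j * (u - 1) = u ^ j - 1 := geom_sum_mul u j

lemma key1 (p : ℕ) (hp : p.Prime) (hodd : p ≠ 2) (c : ℕ) (hc : 1 ≤ c) (u : ℤ)
    (h : (p:ℤ)^c ∣ u - 1) : (p:ℤ)^(c+1) ∣ S u p - p ∧ (p:ℤ)^(c+1) ∣ u^p - 1 := by
  have hp1 : (p:ℤ) ∣ u - 1 := (dvd_pow_self (p:ℤ) (by omega : c ≠ 0)).trans h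
  have hu1 : u ≡ 1 [ZMOD (p:ℤ)] := ((Int.modEq_iff_dvd.2 hp1).symm)
  -- p ∣ S u p
  have hSp : (p:ℤ) ∣ S u p := by
    have h2 : (p:ℤ) ∣ S u p - p := (S_modEq _ _ hu1 p).symm.dvd
    simpa using dvd_add h2 (dvd_refl (p:ℤ))
  constructor
  · -- S u p - p = (∑_{j<p} S u j) * (u-1)
    have hid : S u p - p = (∑ j ∈ Finset.range p, S u j) * (u - 1) := by
      rw [Finset.sum_mul]
      simp only [geom_S]
      rw [Finset.sum_sub_distrib]
      simp [S]
    rw [hid]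
    have hW : (p:ℤ) ∣ ∑ j ∈ Finset.range p, S u j := by
      have hterm : (p:ℤ) ∣ ∑ j ∈ Finset.range p, (S u j - (j:ℤ)) :=
        Finset.dvd_sum fun j _ => (S_modEq _ _ hu1 j).symm.dvd
      have hgauss : (2:ℤ) * ∑ j ∈ Finset.range p, (j:ℤ) = (p:ℤ) * ((p:ℤ) - 1) := by
        have := Finset.sum_range_id_mul_two p
        have : ((∑ i ∈ Finset.range p, i) * 2 : ℕ) = (p * (p-1) : ℕ) := this
        have hcast := congrArg (Nat.cast : ℕ → ℤ) this
        push_cast [hp.pos] at hcast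
        linarith
      have hdvd2 : (p:ℤ) ∣ 2 * ∑ j ∈ Finset.range p, (j:ℤ) := hgauss ▸ Dvd.intro _ rfl
      have hpP : Prime (p:ℤ) := Nat.prime_iff_prime_int.1 hp
      rcases hpP.dvd_mul.mp hdvd2 with h2 | h2
      · exfalso
        have h2' : p ∣ 2 := by exact_mod_cast h2
        have := Nat.le_of_dvd (by norm_num) h2'
        have := hp.two_le
        omega
      · rw [Finset.sum_sub_distrib] at hterm
        simpa using dvd_add hterm h2
    rw [pow_succ, mul_comm ((p:ℤ)^c)]
    exact mul_dvd_mul hW h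
  · rw [← geom_S, pow_succ, mul_comm ((p:ℤ)^c)]
    exact mul_dvd_mul hSp h

lemma key2 (p : ℕ) (hp : p.Prime) (hodd : p ≠ 2) (a : ℕ) (ha : 0 < a) (s : ℤ)
    (hpa : (p:ℤ)^a ∣ s - 1) (k : ℕ) :
    (p:ℤ)^(a+k) ∣ s^(p^k) - 1 ∧ (p:ℤ)^(a+k) ∣ S s (p^k) - (p^k : ℕ) := by
  induction k with
  | zero => simpa [S] using hpa
  | succ k ih =>
    obtain ⟨ih1, ih2⟩ := ih
    set u : ℤ := s^(p^k) with hu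
    have hc : 1 ≤ a + k := by omega
    obtain ⟨k1, k2⟩ := key1 p hp hodd (a+k) hc u ih1
    have hSup : (p:ℤ) ∣ S u p := by
      have hdp : (p:ℤ) ∣ S u p - p := (dvd_pow_self (p:ℤ) (by omega : a+k+1 ≠ 0)).trans k1
      simpa using dvd_add hdp (dvd_refl (p:ℤ))
    constructor
    · have : s^(p^(k+1)) - 1 = u^p - 1 := by rw [hu, ← pow_mul, pow_succ]
      rw [this, show a + (k+1) = (a+k)+1 from rfl]
      exact k2
    · have hSid : S s (p^(k+1)) = S s (p^k) * S u p := by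
        rw [pow_succ, S_mul]
      rw [hSid]
      have hsplit : S s (p^k) * S u p - ((p^(k+1):ℕ):ℤ) =
          (S s (p^k) - (p^k : ℕ)) * S u p + ((p^k : ℕ):ℤ) * (S u p - p) := by
        push_cast [pow_succ]
        ring
      rw [hsplit, show a + (k+1) = (a+k)+1 from rfl]
      refine dvd_add ?_ ?_
      · rw [pow_succ]
        exact mul_dvd_mul ih2 hSup
      · exact Dvd.dvd.mul_left k1 _

theorem stmt9 (p : ℕ) (hp : p.Prime) (hodd : p ≠ 2) (m a n : ℕ)
    (hm : 0 < m) (ha : 0 < a) (hn : 0 < n) (s : ℤ) (hs : (p : ℤ) ∣ s - 1)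
    (hva : emultiplicity (p : ℤ) (s - 1) = a) (ham : a < m)
    (hdiv : (p ^ (m - a) : ℕ) ∣ n ∨ (p ^ (m - a) : ℕ) ∣ n - 1) :
    S s n ≡ (n : ℤ) [ZMOD (p : ℤ) ^ m] := by
  have hpa : (p:ℤ)^a ∣ s - 1 := pow_dvd_of_le_emultiplicity (le_of_eq hva.symm)
  set e := m - a with he
  have hme : m = a + e := by omega
  obtain ⟨k1, k2⟩ := key2 p hp hodd a ha s hpa e
  rw [hme]
  have hu1' : s^(p^e) ≡ 1 [ZMOD (p:ℤ)^(a+e)] := by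
    have : (p:ℤ)^(a+e) ∣ 1 - s^(p^e) := by
      rw [show (1:ℤ) - s^(p^e) = -(s^(p^e) - 1) by ring]
      exact k1.neg_right
    exact Int.modEq_iff_dvd.2 this
  have case1 : ∀ q : ℕ, S s (p^e * q) ≡ ((p^e * q : ℕ) : ℤ) [ZMOD (p:ℤ)^(a+e)] := by
    intro q
    rw [S_mul]
    have h1 : S s (p^e) ≡ ((p^e : ℕ):ℤ) [ZMOD (p:ℤ)^(a+e)] := by
      have : (p:ℤ)^(a+e) ∣ ((p^e:ℕ):ℤ) - S s (p^e) := by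
        rw [show ((p^e:ℕ):ℤ) - S s (p^e) = -(S s (p^e) - (p^e:ℕ)) by ring]
        exact k2.neg_right
      exact Int.modEq_iff_dvd.2 this
    have h2 : S (s^(p^e)) q ≡ (q:ℤ) [ZMOD (p:ℤ)^(a+e)] := S_modEq _ _ hu1' q
    have := h1.mul h2
    push_cast at this ⊢
    exact this
  rcases hdiv with ⟨q, hq⟩ | ⟨q, hq⟩
  · rw [hq]
    exact case1 q
  · have hn' : n = p^e * q + 1 := by omega
    rw [hn', S_succ]
    have h3 : s ^ (p^e * q) ≡ 1 [ZMOD (p:ℤ)^(a+e)] := by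
      rw [pow_mul]
      simpa using Int.ModEq.pow q hu1'
    have := (case1 q).add h3
    push_cast at this ⊢
    exact this
end

section
/- Let m ≥ 2 and s be an integer with v_2(s-1) = 1 (i.e. s ≡ 3 mod 4). If n is a positive integer with n ≡ 0 (mod 2^{m-1}), then S_s(n) ≡ 0 (mod 2^m); and if n ≡ 1 (mod 2^{m-1}), then S_s(n) ≡ 1 (mod 2^m), where S_s(n) = ∑_{i=0}^{n-1} s^i. -/
lemma key_emult (m : ℕ) (hm : 2 ≤ m) (s : ℤ) (hs : emultiplicity (2 : ℤ) (s - 1) = 1)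
    (k : ℕ) (hk : 0 < k) (hd : (2 ^ (m - 1) : ℕ) ∣ k) :
    ((m : ℕ∞) + 1) ≤ emultiplicity (2 : ℤ) (s ^ k - 1) := by
  have h2 : (2 : ℤ) ∣ s - 1 := by
    simpa using pow_dvd_of_le_emultiplicity (k := 1) (by rw [hs]; exact_mod_cast le_refl 1)
  have h4' : ¬ (4 : ℤ) ∣ s - 1 := by
    intro h
    have : ((2 : ℕ) : ℕ∞) ≤ emultiplicity (2 : ℤ) (s - 1) :=
      le_emultiplicity_of_pow_dvd (by norm_num; exact h)
    rw [hs] at this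
    exact absurd this (by decide)
  have hodd : ¬ (2 : ℤ) ∣ s := by
    intro h; omega
  have h4 : (4 : ℤ) ∣ s + 1 := by omega
  have hs1 : ((2 : ℕ) : ℕ∞) ≤ emultiplicity (2 : ℤ) (s + 1) :=
    le_emultiplicity_of_pow_dvd (by norm_num; exact h4)
  have hkZ : (2 : ℤ) ^ (m - 1) ∣ (k : ℤ) := by
    have := Int.natCast_dvd_natCast.mpr hd
    push_cast at this
    exact this
  have hkE : ((m - 1 : ℕ) : ℕ∞) ≤ emultiplicity (2 : ℤ) (k : ℤ) :=
    le_emultiplicity_of_pow_dvd hkZ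
  have hkeven : Even k :=
    even_iff_two_dvd.mpr (dvd_trans (dvd_pow_self 2 (by omega)) hd)
  have key := Int.two_pow_sub_pow (x := s) (y := 1) (by simpa using h2) hodd hkeven
  simp only [one_pow] at key
  have hsum : (((m : ℕ∞) + 1) + 1) ≤
      emultiplicity (2 : ℤ) (s + 1) + emultiplicity (2 : ℤ) (s - 1)
        + emultiplicity (2 : ℤ) (k : ℤ) := by
    have hcast : (((m : ℕ∞) + 1) + 1) = ((2 : ℕ) : ℕ∞) + 1 + ((m - 1 : ℕ) : ℕ∞) := by
      have : ((m + 1 + 1 : ℕ) : ℕ∞) = ((2 + 1 + (m - 1) : ℕ) : ℕ∞) := by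
        congr 1; omega
      push_cast at this
      convert this using 2 <;> push_cast <;> ring_nf
    rw [hcast]
    exact add_le_add (add_le_add hs1 (by rw [hs])) hkE
  rw [← key] at hsum
  exact (ENat.add_le_add_iff_right (by simp)).mp hsum

lemma pow_dvd_S (m : ℕ) (hm : 2 ≤ m) (s : ℤ) (hs : emultiplicity (2 : ℤ) (s - 1) = 1)
    (k : ℕ) (hd : (2 ^ (m - 1) : ℕ) ∣ k) : (2 : ℤ) ^ m ∣ S s k := by
  rcases Nat.eq_zero_or_pos k with rfl | hk
  · simp [S]
  have hE := key_emult m hm s hs k hk hd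
  have hgeom : S s k * (s - 1) = s ^ k - 1 := geom_sum_mul s k
  have hmul : emultiplicity (2 : ℤ) (s ^ k - 1)
      = emultiplicity (2 : ℤ) (S s k) + 1 := by
    rw [← hgeom, emultiplicity_mul Int.prime_two, hs]
  rw [hmul] at hE
  have : (m : ℕ∞) ≤ emultiplicity (2 : ℤ) (S s k) :=
    (ENat.add_le_add_iff_right (by simp)).mp hE
  exact pow_dvd_of_le_emultiplicity this

theorem stmt10 (m : ℕ) (hm : 2 ≤ m) (s : ℤ) (hs : emultiplicity (2 : ℤ) (s - 1) = 1)
    (n : ℕ) (hn : 0 < n) :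
    ((2 ^ (m - 1) : ℕ) ∣ n → S s n ≡ 0 [ZMOD (2 : ℤ) ^ m]) ∧
    (n ≡ 1 [MOD 2 ^ (m - 1)] → S s n ≡ 1 [ZMOD (2 : ℤ) ^ m]) := by
  constructor
  · intro hd
    have := pow_dvd_S m hm s hs n hd
    exact (Int.modEq_iff_dvd.mpr (by simpa using this)).symm
  · intro hmod
    have hd : (2 ^ (m - 1) : ℕ) ∣ n - 1 := (Nat.modEq_iff_dvd' hn).mp hmod.symm
    have hsplit : S s n = S s (n - 1) + s ^ (n - 1) := by
      have : n = (n - 1) + 1 := by omega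
      rw [this]
      simp [S, Finset.sum_range_succ]
    have h1 : (2 : ℤ) ^ m ∣ S s (n - 1) := pow_dvd_S m hm s hs (n - 1) hd
    have h2 : (2 : ℤ) ^ m ∣ s ^ (n - 1) - 1 := by
      rcases Nat.eq_zero_or_pos (n - 1) with h0 | hpos
      · simp [h0]
      · exact pow_dvd_of_le_emultiplicity
          (le_trans (by simp) (key_emult m hm s hs (n - 1) hpos hd))
    refine Int.modEq_iff_dvd.mpr ?_
    have : (1 : ℤ) - S s n = -(S s (n - 1) + (s ^ (n - 1) - 1)) := by
      rw [hsplit]; ring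
    rw [this]
    exact dvd_neg.mpr (dvd_add h1 h2)
end

section
/- Let p be an odd prime, let s, t be integers with s ≡ t ≡ 1 (mod p), and let n be a positive integer. Then S_{s,t}(p^n) ≡ 0 (mod p^n), where S_{s,t}(N) = ∑_{0 ≤ i < j < N} s^i t^j. -/
open Finset

/-- `S2 s t N = ∑_{0 ≤ i < j < N} s^i t^j`. -/
def S2 (s t : ℤ) (N : ℕ) : ℤ := ∑ j ∈ Finset.range N, ∑ i ∈ Finset.range j, s ^ i * t ^ j

private lemma sum_range_add' (f : ℕ → ℤ) (m n : ℕ) :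
    ∑ i ∈ range (m + n), f i = ∑ i ∈ range m, f i + ∑ i ∈ range n, f (m + i) := by
  induction n with
  | zero => simp
  | succ n ih => rw [← Nat.add_assoc, sum_range_succ, ih, sum_range_succ]; ring

private lemma geom_split (s : ℤ) (N : ℕ) (a : ℕ) :
    ∑ i ∈ range (a * N), s ^ i
      = (∑ b ∈ range a, (s ^ N) ^ b) * ∑ i ∈ range N, s ^ i := by
  induction a with
  | zero => simp
  | succ a ih =>
    rw [Nat.succ_mul, sum_range_add', ih, sum_range_succ]
    have : ∀ i, s ^ (a * N + i) = (s ^ N) ^ a * s ^ i := by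
      intro i; rw [pow_add, ← pow_mul, mul_comm a N]
    simp only [this, ← mul_sum]
    ring

private lemma dvd_geom (p : ℕ) (x : ℤ) (h : (p : ℤ) ∣ x - 1) :
    (p : ℤ) ∣ ∑ i ∈ range p, x ^ i := by
  have hx : (x : ZMod p) = 1 := by
    have h0 : ((x - 1 : ℤ) : ZMod p) = 0 :=
      (ZMod.intCast_zmod_eq_zero_iff_dvd _ p).mpr h
    push_cast at h0
    linear_combination h0
  rw [← ZMod.intCast_zmod_eq_zero_iff_dvd]
  push_cast
  simp [hx]

private lemma pow_sub_one_dvd' (p : ℕ) (s : ℤ) (h : (p : ℤ) ∣ s - 1) (k : ℕ) :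
    (p : ℤ) ∣ s ^ k - 1 := by
  have : (s - 1) ∣ s ^ k - 1 := by
    have := sub_dvd_pow_sub_pow s 1 k
    simpa using this
  exact dvd_trans h this

private lemma T_dvd (p : ℕ) (s : ℤ) (h : (p : ℤ) ∣ s - 1) :
    ∀ m, (p : ℤ) ^ m ∣ ∑ i ∈ range (p ^ m), s ^ i := by
  intro m
  induction m with
  | zero => simp
  | succ m ih =>
    have hsplit : (p : ℕ) ^ (m + 1) = p * p ^ m := by ring
    rw [hsplit, geom_split, pow_succ, mul_comm ((p : ℤ) ^ m) (p : ℤ)]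
    exact mul_dvd_mul (dvd_geom p _ (pow_sub_one_dvd' p s h (p ^ m))) ih

private lemma S2_split (s t : ℤ) (N a : ℕ) :
    S2 s t (a * N)
      = S2 (s ^ N) (t ^ N) a * ((∑ i ∈ range N, s ^ i) * (∑ i ∈ range N, t ^ i))
        + (∑ b ∈ range a, ((s * t) ^ N) ^ b) * S2 s t N := by
  induction a with
  | zero => simp [S2]
  | succ a ih =>
    have key : ∑ j ∈ range N, ∑ i ∈ range (a * N + j), s ^ i * t ^ (a * N + j)
        = (∑ b ∈ range a, (s ^ N) ^ b) * (t ^ N) ^ a *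
            ((∑ i ∈ range N, s ^ i) * (∑ i ∈ range N, t ^ i))
          + ((s * t) ^ N) ^ a * S2 s t N := by
      have step : ∀ j, ∑ i ∈ range (a * N + j), s ^ i * t ^ (a * N + j)
          = ((∑ b ∈ range a, (s ^ N) ^ b) * (∑ i ∈ range N, s ^ i)
              + (s ^ N) ^ a * ∑ i ∈ range j, s ^ i) * ((t ^ N) ^ a * t ^ j) := by
        intro j
        rw [← Finset.sum_mul, sum_range_add', geom_split]
        have h1 : ∀ i, s ^ (a * N + i) = (s ^ N) ^ a * s ^ i := by
          intro i; rw [pow_add, ← pow_mul, mul_comm a N]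
        have h2 : t ^ (a * N + j) = (t ^ N) ^ a * t ^ j := by
          rw [pow_add, ← pow_mul, mul_comm a N]
        simp only [h1, ← mul_sum, h2]
      simp only [step]
      have expand : ∀ j, ((∑ b ∈ range a, (s ^ N) ^ b) * (∑ i ∈ range N, s ^ i)
              + (s ^ N) ^ a * ∑ i ∈ range j, s ^ i) * ((t ^ N) ^ a * t ^ j)
          = (∑ b ∈ range a, (s ^ N) ^ b) * (t ^ N) ^ a * (∑ i ∈ range N, s ^ i) * t ^ j
            + (s ^ N) ^ a * (t ^ N) ^ a * ((∑ i ∈ range j, s ^ i) * t ^ j) := by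
        intro j; ring
      simp only [expand, Finset.sum_add_distrib, ← Finset.mul_sum]
      have hS2N : ∑ j ∈ range N, (∑ i ∈ range j, s ^ i) * t ^ j = S2 s t N := by
        unfold S2
        exact Finset.sum_congr rfl fun j _ => Finset.sum_mul _ _ _
      rw [hS2N, mul_pow]
      ring
    have lhs : S2 s t ((a + 1) * N) = S2 s t (a * N)
        + ∑ j ∈ range N, ∑ i ∈ range (a * N + j), s ^ i * t ^ (a * N + j) := by
      unfold S2
      rw [Nat.succ_mul, sum_range_add']
    rw [lhs, ih, key]
    unfold S2
    rw [sum_range_succ (fun j => ∑ i ∈ range j, (s ^ N) ^ i * (t ^ N) ^ j) a,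
      sum_range_succ (fun b => ((s * t) ^ N) ^ b) a]
    have : ∑ i ∈ range a, (s ^ N) ^ i * (t ^ N) ^ a
        = (∑ i ∈ range a, (s ^ N) ^ i) * (t ^ N) ^ a := by
      rw [Finset.sum_mul]
    simp only [this]
    ring

theorem stmt11 (p : ℕ) (hp : p.Prime) (hodd : p ≠ 2) (s t : ℤ)
    (hs : (p : ℤ) ∣ s - 1) (ht : (p : ℤ) ∣ t - 1) (n : ℕ) (hn : 0 < n) :
    S2 s t (p ^ n) ≡ 0 [ZMOD (p : ℤ) ^ n] := by
  have base : (p : ℤ) ∣ S2 s t p := by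
    rw [← ZMod.intCast_zmod_eq_zero_iff_dvd]
    have hx : (s : ZMod p) = 1 := by
      have h0 : ((s - 1 : ℤ) : ZMod p) = 0 := (ZMod.intCast_zmod_eq_zero_iff_dvd _ p).mpr hs
      push_cast at h0; linear_combination h0
    have hy : (t : ZMod p) = 1 := by
      have h0 : ((t - 1 : ℤ) : ZMod p) = 0 := (ZMod.intCast_zmod_eq_zero_iff_dvd _ p).mpr ht
      push_cast at h0; linear_combination h0
    unfold S2
    push_cast
    simp only [hx, hy, one_pow, mul_one, Finset.sum_const, Finset.card_range, nsmul_eq_mul]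
    have hcast : ∑ j ∈ range p, (j : ZMod p) = ((∑ j ∈ range p, j : ℕ) : ZMod p) := by
      push_cast; rfl
    have hdvd : p ∣ ∑ j ∈ range p, j := by
      have h2 : (∑ j ∈ range p, j) * 2 = p * (p - 1) := Finset.sum_range_id_mul_two p
      have hcop : Nat.Coprime p 2 :=
        (Nat.coprime_primes hp Nat.prime_two).mpr hodd
      exact hcop.dvd_of_dvd_mul_right (h2 ▸ Dvd.intro _ rfl)
    calc ∑ j ∈ range p, (j : ZMod p) = ((∑ j ∈ range p, j : ℕ) : ZMod p) := hcast
      _ = 0 := (ZMod.natCast_eq_zero_iff _ p).mpr hdvd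
  have hst : (p : ℤ) ∣ s * t - 1 := by
    have h := dvd_add (hs.mul_right t) ht
    have he : (s - 1) * t + (t - 1) = s * t - 1 := by ring
    rwa [he] at h
  have key : ∀ m, 1 ≤ m → (p : ℤ) ^ m ∣ S2 s t (p ^ m) := by
    intro m hm
    induction m, hm using Nat.le_induction with
    | base => simpa using base
    | succ m hm ih =>
      have hsplit : (p : ℕ) ^ (m + 1) = p * p ^ m := by ring
      rw [hsplit, S2_split]
      apply dvd_add
      · have h1 := T_dvd p s hs m
        have h2 := T_dvd p t ht m
        have h3 : (p : ℤ) ^ (m + 1) ∣ (p : ℤ) ^ m * (p : ℤ) ^ m := by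
          rw [← pow_add]; exact pow_dvd_pow _ (by omega)
        exact Dvd.dvd.mul_left (h3.trans (mul_dvd_mul h1 h2)) _
      · rw [pow_succ, mul_comm ((p : ℤ) ^ m) (p : ℤ)]
        exact mul_dvd_mul
          (dvd_geom p _ (pow_sub_one_dvd' p (s * t) hst (p ^ m))) ih
  exact Int.modEq_zero_iff_dvd.mpr (key n hn)
end

section
/- Let s and t be odd integers and n a positive integer. Then S_{s,t}(2^n) ≡ 2^{n-1} (mod 2^n), where S_{s,t}(N) = ∑_{0 ≤ i < j < N} s^i t^j. -/
def GS (s : ℤ) (N : ℕ) : ℤ := ∑ i ∈ Finset.range N, s ^ i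

lemma GS_add (s : ℤ) (M K : ℕ) : GS s (M + K) = GS s M + s ^ M * GS s K := by
  unfold GS
  rw [Finset.sum_range_add, Finset.mul_sum]
  congr 1
  refine Finset.sum_congr rfl fun i _ => ?_
  rw [pow_add]

lemma S2_add (s t : ℤ) (M K : ℕ) :
    S2 s t (M + K) = S2 s t M + (s * t) ^ M * S2 s t K + GS s M * t ^ M * GS t K := by
  unfold S2
  rw [Finset.sum_range_add]
  have h : ∀ k, ∑ i ∈ Finset.range (M + k), s ^ i * t ^ (M + k)
      = GS s M * t ^ M * t ^ k + (s*t)^M * ((∑ i ∈ Finset.range k, s ^ i * t ^ k)) := by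
    intro k
    rw [← Finset.sum_mul]
    have : (∑ i ∈ Finset.range (M + k), s ^ i) = GS s (M + k) := rfl
    rw [this, GS_add, ← Finset.sum_mul]
    unfold GS
    rw [mul_pow, pow_add]
    ring
  rw [Finset.sum_congr rfl (fun k _ => h k), Finset.sum_add_distrib, ← Finset.mul_sum,
    ← Finset.mul_sum]
  unfold GS
  ring

lemma pow2_dvd_GS (u : ℤ) (hu : Odd u) (k : ℕ) : (2:ℤ) ^ k ∣ GS u (2 ^ k) := by
  induction k with
  | zero => simp [GS]
  | succ k ih =>
    have hsplit : GS u (2^(k+1)) = GS u (2^k) * (1 + u ^ (2^k)) := by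
      rw [pow_succ, mul_two, GS_add]; ring
    rw [hsplit, pow_succ]
    refine mul_dvd_mul ih ?_
    rw [add_comm]
    exact (hu.pow).add_one.two_dvd

lemma odd_pow2 (u : ℤ) (hu : Odd u) (k : ℕ) :
    u ^ (2 ^ k) ≡ 1 [ZMOD (2:ℤ) ^ (k + 1)] := by
  induction k with
  | zero =>
    obtain ⟨m, rfl⟩ := hu
    have : ((2:ℤ)^(0+1)) ∣ (2*m+1)^(2^0) - 1 := ⟨m, by ring⟩
    exact (Int.ModEq.symm (Int.modEq_iff_dvd.mpr this))
  | succ k ih =>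
    obtain ⟨c, hc⟩ := (Int.modEq_iff_dvd.mp ih.symm : ((2:ℤ)^(k+1)) ∣ u^(2^k) - 1)
    have hx : u ^ (2^(k+1)) = (u ^ (2^k))^2 := by rw [← pow_mul, pow_succ]
    have hU : u ^ (2^k) = 1 + 2^(k+1) * c := by linarith
    have : ((2:ℤ)^(k+1+1)) ∣ u ^ (2^(k+1)) - 1 := by
      refine ⟨c + 2^k * c^2, ?_⟩
      rw [hx, hU]; ring
    exact (Int.ModEq.symm (Int.modEq_iff_dvd.mpr this))

lemma main_aux (s t : ℤ) (hs : Odd s) (ht : Odd t) (m : ℕ) :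
    S2 s t (2 ^ (m + 1)) ≡ 2 ^ m [ZMOD (2:ℤ) ^ (m + 1)] := by
  induction m with
  | zero =>
    have h2 : S2 s t 2 = t := by simp [S2, Finset.sum_range_succ]
    have h20 : (2:ℕ)^(0+1) = 2 := rfl
    rw [h20, h2]
    obtain ⟨c, hc⟩ := ht
    exact (Int.ModEq.symm (Int.modEq_iff_dvd.mpr ⟨c, by rw [hc]; ring_nf⟩))
  | succ m ih =>
    have hsplit : S2 s t (2^(m+2)) = S2 s t (2^(m+1)) * (1 + (s*t)^(2^(m+1)))
        + GS s (2^(m+1)) * t^(2^(m+1)) * GS t (2^(m+1)) := by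
      have : (2:ℕ)^(m+2) = 2^(m+1) + 2^(m+1) := by ring
      rw [this, S2_add]; ring
    rw [hsplit]
    -- third term ≡ 0
    have h3 : GS s (2^(m+1)) * t^(2^(m+1)) * GS t (2^(m+1)) ≡ 0 [ZMOD (2:ℤ)^(m+2)] := by
      apply (Int.modEq_iff_dvd.mpr _).symm
      rw [sub_zero]
      obtain ⟨a, ha⟩ := pow2_dvd_GS s hs (m+1)
      obtain ⟨b, hb⟩ := pow2_dvd_GS t ht (m+1)
      refine ⟨2^m * a * t^(2^(m+1)) * b, ?_⟩
      rw [ha, hb]; ring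
    -- first term ≡ 2 * S2 ... ≡ 2^(m+1)
    have h1 : S2 s t (2^(m+1)) * (1 + (s*t)^(2^(m+1))) ≡ S2 s t (2^(m+1)) * 2
        [ZMOD (2:ℤ)^(m+2)] := by
      apply Int.ModEq.mul_left
      have := odd_pow2 (s*t) (hs.mul ht) (m+1)
      calc 1 + (s*t)^(2^(m+1)) ≡ 1 + 1 [ZMOD (2:ℤ)^(m+2)] := Int.ModEq.add_left 1 this
        _ = 2 := by norm_num
    have h2 : S2 s t (2^(m+1)) * 2 ≡ 2^m * 2 [ZMOD (2:ℤ)^(m+2)] := by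
      have h := ih.mul_right' (c := 2)
      rwa [show (2:ℤ)^(m+1) * 2 = 2^(m+2) by ring] at h
    have : S2 s t (2^(m+1)) * (1 + (s*t)^(2^(m+1)))
        + GS s (2^(m+1)) * t^(2^(m+1)) * GS t (2^(m+1))
        ≡ 2^m * 2 + 0 [ZMOD (2:ℤ)^(m+2)] := (h1.trans h2).add h3
    simpa [pow_succ] using this

theorem stmt12 (s t : ℤ) (hs : Odd s) (ht : Odd t) (n : ℕ) (hn : 0 < n) :
    S2 s t (2 ^ n) ≡ 2 ^ (n - 1) [ZMOD (2 : ℤ) ^ n] := by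
  obtain ⟨m, rfl⟩ := Nat.exists_eq_add_of_lt hn
  simpa using main_aux s t hs ht m
end

section
/- Let m be a positive integer, and let s₁, s₂ be integers with s₁ ≡ -1 (mod 4) and s₂ odd. Set o₁ = max(0, m - v_2(s₁+1)) and o₂ = max(0, m - v_2(s₂-1)). If n is a positive integer with max(o₁, o₂) ≤ n - 1, then S_{s₁,s₂}(2^n) ≡ 2^{n-1} (mod 2^m). -/
lemma S2_eq (s t : ℤ) (N : ℕ) :
    S2 s t N = ∑ j ∈ Finset.range N, (∑ i ∈ Finset.range j, s ^ i) * t ^ j := by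
  simp [S2, Finset.sum_mul]

lemma S2_two_mul (s t : ℤ) (N : ℕ) :
    S2 s t (2 * N) = (1 + (s * t) ^ N) * S2 s t N
      + t ^ N * ((∑ i ∈ Finset.range N, s ^ i) * (∑ j ∈ Finset.range N, t ^ j)) := by
  rw [S2_eq, two_mul, Finset.sum_range_add]
  have h1 : ∀ j ∈ Finset.range N,
      (∑ i ∈ Finset.range (N + j), s ^ i) * t ^ (N + j)
        = t ^ N * (∑ i ∈ Finset.range N, s ^ i) * t ^ j
          + (s * t) ^ N * ((∑ i ∈ Finset.range j, s ^ i) * t ^ j) := by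
    intro j _
    rw [Finset.sum_range_add, pow_add, mul_pow]
    have : ∀ x ∈ Finset.range j, s ^ (N + x) = s ^ N * s ^ x := fun x _ => pow_add s N x
    rw [Finset.sum_congr rfl this, ← Finset.mul_sum]
    ring
  rw [Finset.sum_congr rfl h1, Finset.sum_add_distrib, ← Finset.mul_sum, ← Finset.mul_sum,
    ← S2_eq]
  ring

lemma geom_dvd (s : ℤ) (c : ℕ) (hs : Odd s) (hsc : (2:ℤ) ^ c ∣ s + 1) :
    ∀ k, 1 ≤ k → (2:ℤ) ^ (c + (k - 1)) ∣ ∑ i ∈ Finset.range (2 ^ k), s ^ i := by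
  intro k hk
  induction k with
  | zero => omega
  | succ k ih =>
    rcases Nat.eq_or_lt_of_le hk with h1 | h1
    · simp only [← h1]
      simpa [Finset.sum_range_succ, add_comm] using hsc
    · have hk1 : 1 ≤ k := by omega
      rw [show (2:ℕ)^(k+1) = 2^k + 2^k by omega, Finset.sum_range_add]
      have h2 : ∀ x ∈ Finset.range (2^k), s ^ (2^k + x) = s ^ (2^k) * s ^ x :=
        fun x _ => pow_add s _ x
      rw [Finset.sum_congr rfl h2, ← Finset.mul_sum]
      have heven : (2:ℤ) ∣ 1 + s ^ (2^k) := by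
        rcases hs with ⟨r, hr⟩
        refine ⟨(1 + (2*r+1)^(2^k)) / 2, ?_⟩
        have : Odd ((2*r+1) ^ (2^k)) := (odd_two_mul_add_one r).pow
        rcases this with ⟨u, hu⟩
        subst hr; omega
      have : (2:ℤ) ^ (c + (k - 1)) * 2 ∣ (∑ i ∈ Finset.range (2^k), s ^ i) * (1 + s ^ (2^k)) :=
        mul_dvd_mul (ih hk1) heven
      have hexp : c + (k + 1 - 1) = c + (k - 1) + 1 := by omega
      rw [hexp, pow_succ]
      calc (2:ℤ) ^ (c + (k-1)) * 2 ∣ (∑ i ∈ Finset.range (2^k), s ^ i) * (1 + s ^ (2^k)) := this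
        _ = ∑ i ∈ Finset.range (2^k), s ^ i + s ^ 2 ^ k * ∑ i ∈ Finset.range (2^k), s ^ i := by ring

lemma geomt_dvd (t : ℤ) (ht : Odd t) :
    ∀ k, (2:ℤ) ^ k ∣ ∑ i ∈ Finset.range (2 ^ k), t ^ i := by
  intro k
  induction k with
  | zero => simp
  | succ k ih =>
    rw [show (2:ℕ)^(k+1) = 2^k + 2^k by omega, Finset.sum_range_add]
    have h2 : ∀ x ∈ Finset.range (2^k), t ^ (2^k + x) = t ^ (2^k) * t ^ x :=
      fun x _ => pow_add t _ x
    rw [Finset.sum_congr rfl h2, ← Finset.mul_sum]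
    have heven : (2:ℤ) ∣ 1 + t ^ (2^k) := by
      rcases ht with ⟨r, hr⟩
      have : Odd ((2*r+1) ^ (2^k)) := (odd_two_mul_add_one r).pow
      rcases this with ⟨u, hu⟩
      exact ⟨u + 1, by subst hr; omega⟩
    have : (2:ℤ) ^ k * 2 ∣ (∑ i ∈ Finset.range (2^k), t ^ i) * (1 + t ^ (2^k)) :=
      mul_dvd_mul ih heven
    rw [pow_succ]
    calc (2:ℤ) ^ k * 2 ∣ (∑ i ∈ Finset.range (2^k), t ^ i) * (1 + t ^ (2^k)) := this
      _ = ∑ i ∈ Finset.range (2^k), t ^ i + t ^ 2 ^ k * ∑ i ∈ Finset.range (2^k), t ^ i := by ring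

lemma pow_two_pow_sub_one (w : ℤ) (c : ℕ) (hw : Odd w) (hc : (2:ℤ) ^ c ∣ w + 1) :
    ∀ k, 1 ≤ k → (2:ℤ) ^ (c + k) ∣ w ^ (2 ^ k) - 1 := by
  intro k hk
  induction k with
  | zero => omega
  | succ k ih =>
    have hodd : ∀ j : ℕ, Odd (w ^ j) := fun j => hw.pow
    rcases Nat.eq_or_lt_of_le hk with h1 | h1
    · simp only [← h1]
      have : w ^ 2 ^ 1 - 1 = (w + 1) * (w - 1) := by ring
      rw [this]
      have h2 : (2:ℤ) ∣ w - 1 := by rcases hw with ⟨r, hr⟩; exact ⟨r, by omega⟩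
      have := mul_dvd_mul hc h2
      rwa [← pow_succ] at this
    · have hk1 : 1 ≤ k := by omega
      have hfac : w ^ 2 ^ (k+1) - 1 = (w ^ 2 ^ k - 1) * (w ^ 2 ^ k + 1) := by
        rw [pow_succ 2 k, pow_mul]; ring
      rw [hfac]
      have h2 : (2:ℤ) ∣ w ^ 2 ^ k + 1 := by
        rcases hodd (2 ^ k) with ⟨r, hr⟩; exact ⟨r + 1, by omega⟩
      have := mul_dvd_mul (ih hk1) h2
      rwa [← pow_succ] at this

lemma key_dvd (s t : ℤ) (c : ℕ) (hs : Odd s) (ht : Odd t)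
    (hsc : (2:ℤ) ^ c ∣ s + 1) (htc : (2:ℤ) ^ c ∣ t - 1) :
    ∀ k, 1 ≤ k → (2:ℤ) ^ (k - 1 + c) ∣ S2 s t (2 ^ k) - 2 ^ (k - 1) := by
  have hst : Odd (s * t) := hs.mul ht
  have hstc : (2:ℤ) ^ c ∣ s * t + 1 := by
    have : s * t + 1 = t * (s + 1) - (t - 1) := by ring
    rw [this]; exact dvd_sub (hsc.mul_left t) htc
  intro k hk
  induction k with
  | zero => omega
  | succ k ih =>
    rcases Nat.eq_or_lt_of_le hk with h1 | h1
    · simp only [← h1]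
      have : S2 s t (2 ^ 1) = t := by
        simp [S2, Finset.sum_range_succ]
      rw [this]
      simpa using htc
    · have hk1 : 1 ≤ k := by omega
      have hdec : S2 s t (2 ^ (k+1)) - 2 ^ (k+1-1) =
          (1 + (s*t) ^ (2^k)) * (S2 s t (2^k) - 2 ^ (k-1))
          + 2 ^ (k-1) * ((s*t) ^ (2^k) - 1)
          + t ^ (2^k) * ((∑ i ∈ Finset.range (2^k), s ^ i) *
              (∑ j ∈ Finset.range (2^k), t ^ j)) := by
        rw [show (2:ℕ)^(k+1) = 2 * 2^k by omega, S2_two_mul]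
        rw [show (2:ℤ) ^ (k+1-1) = 2 ^ (k-1) * 2 by
          rw [← pow_succ]; congr 1; omega]
        have hmp : (s*t) ^ (2^k) = s ^ (2^k) * t ^ (2^k) := mul_pow s t _
        rw [hmp]; ring
      rw [hdec, show k + 1 - 1 + c = k + c by omega]
      have p1 : (2:ℤ) ^ (k + c) ∣ (1 + (s*t) ^ (2^k)) * (S2 s t (2^k) - 2 ^ (k-1)) := by
        have he : (2:ℤ) ∣ 1 + (s*t) ^ (2^k) := by
          rcases hst.pow (n := 2^k) with ⟨r, hr⟩
          exact ⟨r + 1, by omega⟩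
        have := mul_dvd_mul he (ih hk1)
        rwa [show (2:ℤ) * 2 ^ (k - 1 + c) = 2 ^ (k + c) by
          rw [← pow_succ']; congr 1; omega] at this
      have p2 : (2:ℤ) ^ (k + c) ∣ 2 ^ (k-1) * ((s*t) ^ (2^k) - 1) := by
        have := pow_two_pow_sub_one (s*t) c hst hstc k hk1
        rw [add_comm c k] at this
        exact this.mul_left _
      have p3 : (2:ℤ) ^ (k + c) ∣ t ^ (2^k) * ((∑ i ∈ Finset.range (2^k), s ^ i) *
          (∑ j ∈ Finset.range (2^k), t ^ j)) := by
        have := mul_dvd_mul (geom_dvd s c hs hsc k hk1) (geomt_dvd t ht k)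
        rw [← pow_add] at this
        have h4 : (2:ℤ) ^ (k + c) ∣ 2 ^ (c + (k-1) + k) := pow_dvd_pow 2 (by omega)
        exact ((h4.trans this).mul_left _)
      exact dvd_add (dvd_add p1 p2) p3

lemma extract_val (m d : ℕ) (x : ℤ)
    (h : (m : ℕ∞) - emultiplicity (2 : ℤ) x ≤ (d : ℕ∞)) :
    ∃ a : ℕ, (2:ℤ) ^ a ∣ x ∧ m ≤ d + a := by
  by_cases hcase : (m : ℕ∞) ≤ emultiplicity (2 : ℤ) x
  · exact ⟨m, pow_dvd_of_le_emultiplicity hcase, by omega⟩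
  · push_neg at hcase
    obtain ⟨e, he, hem⟩ := WithTop.lt_iff_exists_coe.mp hcase
    refine ⟨e, pow_dvd_of_le_emultiplicity (le_of_eq he.symm), ?_⟩
    rw [he] at h
    have h2 : ((m - e : ℕ) : ℕ∞) ≤ (d : ℕ∞) := by rwa [ENat.coe_sub]
    have := Nat.cast_le.mp h2
    omega
/-- With `o₁ = max(0, m - v₂(s₁+1))` and `o₂ = max(0, m - v₂(s₂-1))` encoded via
truncated subtraction in `ℕ∞` (so that `v₂(0) = ∞` is allowed), if
`max(o₁,o₂) ≤ n-1` then `S_{s₁,s₂}(2^n) ≡ 2^{n-1} (mod 2^m)`. -/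
theorem stmt13 (m : ℕ) (hm : 0 < m) (s₁ s₂ : ℤ)
    (hs₁ : (4 : ℤ) ∣ s₁ + 1) (hs₂ : Odd s₂) (n : ℕ) (hn : 0 < n)
    (h : max ((m : ℕ∞) - emultiplicity (2 : ℤ) (s₁ + 1))
           ((m : ℕ∞) - emultiplicity (2 : ℤ) (s₂ - 1)) ≤ (n : ℕ∞) - 1) :
    S2 s₁ s₂ (2 ^ n) ≡ 2 ^ (n - 1) [ZMOD (2 : ℤ) ^ m] := by
  have hcoe : ((n : ℕ∞) - 1) = ((n - 1 : ℕ) : ℕ∞) := by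
    rw [ENat.coe_sub]; rfl
  rw [hcoe, max_le_iff] at h
  obtain ⟨a, ha, hma⟩ := extract_val m (n-1) (s₁ + 1) h.1
  obtain ⟨b, hb, hmb⟩ := extract_val m (n-1) (s₂ - 1) h.2
  set c := min a b with hc
  have hsc : (2:ℤ) ^ c ∣ s₁ + 1 := (pow_dvd_pow 2 (min_le_left a b)).trans ha
  have htc : (2:ℤ) ^ c ∣ s₂ - 1 := (pow_dvd_pow 2 (min_le_right a b)).trans hb
  have hodd₁ : Odd s₁ := by
    rcases hs₁ with ⟨r, hr⟩
    exact ⟨2 * r - 1, by omega⟩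
  have hkey := key_dvd s₁ s₂ c hodd₁ hs₂ hsc htc n hn
  have hmle : m ≤ n - 1 + c := by omega
  have hdvd : (2:ℤ) ^ m ∣ S2 s₁ s₂ (2 ^ n) - 2 ^ (n - 1) :=
    (pow_dvd_pow 2 hmle).trans hkey
  exact (Int.modEq_iff_dvd.mpr hdvd).symm
end
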